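/- The weight w(x) = e^{-x^2}/(1+2x^2)^2 on the real line makes the exceptional Hermite polynomials orthogonal: for m, n ∉ {1,2} with m ≠ n, ∫_{-∞}^{∞} p_m(x) p_n(x) e^{-x^2}/(1+2x^2)^2 dx = 0, where p_n(x) = H_n(x) + 4n H_{n-2}(x) + 4n(n-3) H_{n-4}(x). -/

import Mathlib

open Polynomial MeasureTheory

/-- Physicists' Hermite polynomials `H_n`, satisfying `H_{n+1} = 2x H_n - 2n H_{n-1}`,
equivalently given by the Rodrigues formula `H_n(x) = (-1)^n e^{x^2} (d/dx)^n e^{-x^2}`. -/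
noncomputable def hermiteP : ℕ → Polynomial ℝ
  | 0 => 1
  | 1 => C 2 * X
  | (n + 2) => C 2 * X * hermiteP (n + 1) - C (2 * ((n : ℝ) + 1)) * hermiteP n

/-- `H_k` extended by `0` for `k < 0`. -/
noncomputable def Hz (k : ℤ) : Polynomial ℝ :=
  if k < 0 then 0 else hermiteP k.toNat

/-- Unnormalized exceptional Hermite polynomials
`p_n = H_n + 4n H_{n-2} + 4n(n-3) H_{n-4}` (and `0` for negative index). -/
noncomputable def pE (k : ℤ) : Polynomial ℝ :=
  if k < 0 then 0 else
    Hz k + C (4 * (k : ℝ)) * Hz (k - 2) + C (4 * (k : ℝ) * ((k : ℝ) - 3)) * Hz (k - 4)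

lemma hermiteP_add_two (n : ℕ) :
    hermiteP (n + 2) = C 2 * X * hermiteP (n + 1) - C (2 * ((n : ℝ) + 1)) * hermiteP n := rfl

lemma hermiteP_deriv : ∀ n : ℕ, (hermiteP (n+1)).derivative = C (2*((n:ℝ)+1)) * hermiteP n := by
  intro n
  induction n using Nat.twoStepInduction with
  | zero => simp [hermiteP]
  | one =>
    rw [hermiteP_add_two]
    simp [hermiteP, derivative_mul]
    ring
  | more n ih1 ih2 =>
    rw [show n + 2 + 1 = (n+1) + 2 from rfl, hermiteP_add_two]
    rw [derivative_sub, derivative_mul, derivative_mul, ih2, derivative_mul, ih1]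
    have h2 := hermiteP_add_two n
    simp only [derivative_C, derivative_X, zero_mul, mul_one, zero_add] at *
    simp only [map_mul, map_add, map_ofNat, map_one, map_natCast] at *
    push_cast at *
    linear_combination (-(2*(n:ℝ[X])+4)) * h2

lemma Hz_natCast (n : ℕ) : Hz (n : ℤ) = hermiteP n := by simp [Hz]

lemma Hz_neg {k : ℤ} (h : k < 0) : Hz k = 0 := if_pos h

lemma Hz_deriv (k : ℤ) : (Hz k).derivative = C (2*(k:ℝ)) * Hz (k-1) := by
  rcases lt_trichotomy k 0 with h | h | h
  · rw [Hz_neg h, Hz_neg (by omega)]; simp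
  · subst h; simp [Hz, hermiteP]
  · obtain ⟨n, rfl⟩ : ∃ n : ℕ, k = (n : ℤ) + 1 := ⟨(k-1).toNat, by omega⟩
    rw [show (n:ℤ) + 1 - 1 = (n:ℤ) from by ring, Hz_natCast,
      show ((n:ℤ)+1) = ((n+1 : ℕ) : ℤ) from by push_cast; ring, Hz_natCast, hermiteP_deriv]
    push_cast; ring_nf

lemma Hz_rec (k : ℤ) (h : 0 ≤ k) :
    Hz (k+1) = C 2 * X * Hz k - C (2*(k:ℝ)) * Hz (k-1) := by
  rcases eq_or_lt_of_le h with h0 | h0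
  · subst h0
    norm_num [Hz, hermiteP]
  · obtain ⟨n, rfl⟩ : ∃ n : ℕ, k = (n : ℤ) + 1 := ⟨(k-1).toNat, by omega⟩
    rw [show (n:ℤ) + 1 - 1 = ((n:ℕ):ℤ) from by ring,
      show (n:ℤ) + 1 + 1 = ((n+2 : ℕ) : ℤ) from by push_cast; ring,
      show (n:ℤ) + 1 = ((n+1 : ℕ) : ℤ) from by push_cast; ring,
      Hz_natCast, Hz_natCast, Hz_natCast, hermiteP_add_two]
    push_cast; ring_nf

lemma R2 (k a b : ℤ) (c : ℝ) (hk : 0 ≤ k) (ha : a = k+1) (hb : b = k-1) (hc : c = 2*(k:ℝ)) :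
    C 2 * X * Hz k = Hz a + C c * Hz b := by
  subst ha; subst hb; subst hc
  linear_combination (-1 : ℝ[X]) * Hz_rec k hk

lemma HzD (k a : ℤ) (c : ℝ) (ha : a = k-1) (hc : c = 2*(k:ℝ)) :
    (Hz k).derivative = C c * Hz a := by
  subst ha; subst hc; exact Hz_deriv k

lemma pE_expand (n : ℕ) (m a b : ℤ) (c1 c2 : ℝ) (hm : m = (n:ℤ)) (ha : a = (n:ℤ)-2)
    (hb : b = (n:ℤ)-4) (h1 : c1 = 4*(n:ℝ)) (h2 : c2 = 4*(n:ℝ)*((n:ℝ)-3)) :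
    pE (n:ℤ) = Hz m + C c1 * Hz a + C c2 * Hz b := by
  subst hm; subst ha; subst hb; subst h1; subst h2
  rw [pE, if_neg (by omega)]
  push_cast
  ring_nf
lemma pE_ode (n : ℕ) (h1 : n ≠ 1) (h2 : n ≠ 2) :
    (C 2 * X^2 + 1) * ((pE (n:ℤ)).derivative.derivative)
      + C (2*(n:ℝ)) * ((C 2 * X^2 + 1) * pE (n:ℤ))
      = C 2 * X * (C 2 * X^2 + C 5) * (pE (n:ℤ)).derivative := by
  obtain h8 | ⟨j, rfl⟩ : n < 8 ∨ ∃ j, n = j + 8 := by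
    rcases lt_or_ge n 8 with h | h
    · exact Or.inl h
    · exact Or.inr ⟨n - 8, by omega⟩
  · interval_cases n
    · norm_num [pE, Hz, hermiteP]
    · exact absurd rfl h1
    · exact absurd rfl h2
    · norm_num [pE, Hz, hermiteP, Int.toNat]
      simp only [derivative_add, derivative_sub, derivative_mul, derivative_C, derivative_X,
        derivative_one, map_mul, map_add, map_ofNat, map_one, map_sub]
      ring
    · norm_num [pE, Hz, hermiteP, Int.toNat]
      simp only [derivative_add, derivative_sub, derivative_mul, derivative_C, derivative_X,
        derivative_one, map_mul, map_add, map_ofNat, map_one, map_sub]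
      ring
    · norm_num [pE, Hz, hermiteP, Int.toNat]
      simp only [derivative_add, derivative_sub, derivative_mul, derivative_C, derivative_X,
        derivative_one, map_mul, map_add, map_ofNat, map_one, map_sub]
      ring
    · norm_num [pE, Hz, hermiteP, Int.toNat]
      simp only [derivative_add, derivative_sub, derivative_mul, derivative_C, derivative_X,
        derivative_one, map_mul, map_add, map_ofNat, map_one, map_sub]
      ring
    · norm_num [pE, Hz, hermiteP, Int.toNat]
      simp only [derivative_add, derivative_sub, derivative_mul, derivative_C, derivative_X,
        derivative_one, map_mul, map_add, map_ofNat, map_one, map_sub]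
      ring
  · -- generic case n = j + 8
    have e0 : pE (((j+8:ℕ)):ℤ) = C ((1)) * Hz ((j:ℤ)+8) + C ((32)+(4)*(j:ℝ)) * Hz ((j:ℤ)+6) + C ((160)+(52)*(j:ℝ)+(4)*(j:ℝ)^2) * Hz ((j:ℤ)+4) := by
      refine pE_expand (j+8) ((j:ℤ)+8) ((j:ℤ)+6) ((j:ℤ)+4) _ _ (by push_cast; ring) (by push_cast; ring) (by push_cast; ring) rfl rfl |>.trans ?_
      simp only [map_mul, map_add, map_ofNat, map_one, map_natCast, map_pow, map_sub]
      push_cast; ring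
    have hd8 : (Hz ((j:ℤ)+8)).derivative = C (2*(j:ℝ)+16) * Hz ((j:ℤ)+7) := HzD ((j:ℤ)+8) ((j:ℤ)+7) (2*(j:ℝ)+16) (by ring) (by push_cast; ring)
    have hd7 : (Hz ((j:ℤ)+7)).derivative = C (2*(j:ℝ)+14) * Hz ((j:ℤ)+6) := HzD ((j:ℤ)+7) ((j:ℤ)+6) (2*(j:ℝ)+14) (by ring) (by push_cast; ring)
    have hd6 : (Hz ((j:ℤ)+6)).derivative = C (2*(j:ℝ)+12) * Hz ((j:ℤ)+5) := HzD ((j:ℤ)+6) ((j:ℤ)+5) (2*(j:ℝ)+12) (by ring) (by push_cast; ring)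
    have hd5 : (Hz ((j:ℤ)+5)).derivative = C (2*(j:ℝ)+10) * Hz ((j:ℤ)+4) := HzD ((j:ℤ)+5) ((j:ℤ)+4) (2*(j:ℝ)+10) (by ring) (by push_cast; ring)
    have hd4 : (Hz ((j:ℤ)+4)).derivative = C (2*(j:ℝ)+8) * Hz ((j:ℤ)+3) := HzD ((j:ℤ)+4) ((j:ℤ)+3) (2*(j:ℝ)+8) (by ring) (by push_cast; ring)
    have hd3 : (Hz ((j:ℤ)+3)).derivative = C (2*(j:ℝ)+6) * Hz ((j:ℤ)+2) := HzD ((j:ℤ)+3) ((j:ℤ)+2) (2*(j:ℝ)+6) (by ring) (by push_cast; ring)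
    have e1 : (C ((1)) * Hz ((j:ℤ)+8) + C ((32)+(4)*(j:ℝ)) * Hz ((j:ℤ)+6) + C ((160)+(52)*(j:ℝ)+(4)*(j:ℝ)^2) * Hz ((j:ℤ)+4)).derivative = C ((16)+(2)*(j:ℝ)) * Hz ((j:ℤ)+7) + C ((384)+(112)*(j:ℝ)+(8)*(j:ℝ)^2) * Hz ((j:ℤ)+5) + C ((1280)+(736)*(j:ℝ)+(136)*(j:ℝ)^2+(8)*(j:ℝ)^3) * Hz ((j:ℤ)+3) := by
      simp only [derivative_add, derivative_mul, derivative_C, hd8, hd6, hd4, zero_mul, zero_add]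
      simp only [map_mul, map_add, map_ofNat, map_one, map_natCast, map_pow, map_sub]
      push_cast; ring
    have e2 : (C ((16)+(2)*(j:ℝ)) * Hz ((j:ℤ)+7) + C ((384)+(112)*(j:ℝ)+(8)*(j:ℝ)^2) * Hz ((j:ℤ)+5) + C ((1280)+(736)*(j:ℝ)+(136)*(j:ℝ)^2+(8)*(j:ℝ)^3) * Hz ((j:ℤ)+3)).derivative = C ((224)+(60)*(j:ℝ)+(4)*(j:ℝ)^2) * Hz ((j:ℤ)+6) + C ((3840)+(1888)*(j:ℝ)+(304)*(j:ℝ)^2+(16)*(j:ℝ)^3) * Hz ((j:ℤ)+4) + C ((7680)+(6976)*(j:ℝ)+(2288)*(j:ℝ)^2+(320)*(j:ℝ)^3+(16)*(j:ℝ)^4) * Hz ((j:ℤ)+2) := by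
      simp only [derivative_add, derivative_mul, derivative_C, hd7, hd5, hd3, zero_mul, zero_add]
      simp only [map_mul, map_add, map_ofNat, map_one, map_natCast, map_pow, map_sub]
      push_cast; ring
    have r3 := R2 ((j:ℤ)+3) ((j:ℤ)+4) ((j:ℤ)+2) (2*(j:ℝ)+6) (by omega) (by ring) (by ring) (by push_cast; ring)
    have r4 := R2 ((j:ℤ)+4) ((j:ℤ)+5) ((j:ℤ)+3) (2*(j:ℝ)+8) (by omega) (by ring) (by ring) (by push_cast; ring)
    have r5 := R2 ((j:ℤ)+5) ((j:ℤ)+6) ((j:ℤ)+4) (2*(j:ℝ)+10) (by omega) (by ring) (by ring) (by push_cast; ring)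
    have r6 := R2 ((j:ℤ)+6) ((j:ℤ)+7) ((j:ℤ)+5) (2*(j:ℝ)+12) (by omega) (by ring) (by ring) (by push_cast; ring)
    have r7 := R2 ((j:ℤ)+7) ((j:ℤ)+8) ((j:ℤ)+6) (2*(j:ℝ)+14) (by omega) (by ring) (by ring) (by push_cast; ring)
    rw [e0, e1, e2]
    simp only [map_mul, map_add, map_ofNat, map_one, map_natCast, map_pow, map_sub] at r3 r4 r5 r6 r7 ⊢
    push_cast
    set J : ℝ[X] := ((j:ℕ) : ℝ[X]) with hJ
    linear_combination (((-1280)+(-736)*J+(-136)*J^2+(-8)*J^3)+((-2560)+(-1472)*J+(-272)*J^2+(-16)*J^3)*X^2) * r3 + (((1280)+(416)*J+(32)*J^2)*X) * r4 + (((-512)+(-128)*J+(-8)*J^2)+((-768)+(-224)*J+(-16)*J^2)*X^2) * r5 + (((128)+(16)*J)*X) * r6 + (((-16)+(-2)*J)+((-32)+(-4)*J)*X^2) * r7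

open Filter Real

lemma poly_bound (Q : ℝ[X]) : ∃ B : ℝ, 0 ≤ B ∧ ∀ x : ℝ, |Q.eval x| ≤ B * Real.exp (x^2/2) := by
  induction Q using Polynomial.induction_on' with
  | add p q hp hq =>
    obtain ⟨B1, hB1, h1⟩ := hp
    obtain ⟨B2, hB2, h2⟩ := hq
    refine ⟨B1 + B2, by positivity, fun x => ?_⟩
    calc |(p+q).eval x| ≤ |p.eval x| + |q.eval x| := by simp [eval_add]; exact abs_add_le _ _
    _ ≤ B1 * Real.exp (x^2/2) + B2 * Real.exp (x^2/2) := add_le_add (h1 x) (h2 x)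
    _ = (B1+B2) * Real.exp (x^2/2) := by ring
  | monomial k a =>
    refine ⟨|a| * k.factorial * Real.exp (1/2), by positivity, fun x => ?_⟩
    have h1 : |x|^k ≤ k.factorial * Real.exp |x| := by
      have h0 := Real.pow_div_factorial_le_exp (x := |x|) (abs_nonneg x) k
      rw [div_le_iff₀ (by positivity)] at h0
      linarith [h0]
    have h2 : Real.exp |x| ≤ Real.exp (1/2) * Real.exp (x^2/2) := by
      rw [← Real.exp_add]
      apply Real.exp_le_exp.2
      nlinarith [sq_nonneg (|x| - 1), sq_abs x]
    calc |(monomial k a).eval x| = |a| * |x|^k := by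
          simp [eval_monomial, abs_mul, abs_pow]
    _ ≤ |a| * (k.factorial * (Real.exp (1/2) * Real.exp (x^2/2))) := by
          apply mul_le_mul_of_nonneg_left _ (abs_nonneg a)
          calc (|x|:ℝ)^k ≤ k.factorial * Real.exp |x| := h1
          _ ≤ k.factorial * (Real.exp (1/2) * Real.exp (x^2/2)) := by
              apply mul_le_mul_of_nonneg_left h2 (by positivity)
    _ = |a| * k.factorial * Real.exp (1/2) * Real.exp (x^2/2) := by ring

lemma weight_le (x : ℝ) : Real.exp (-x^2) / (1+2*x^2)^2 ≤ Real.exp (-x^2) := by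
  rw [div_le_iff₀ (by positivity)]
  nlinarith [Real.exp_pos (-x^2), sq_nonneg x, sq_nonneg (x^2)]

lemma bound_key (Q : ℝ[X]) : ∃ B : ℝ, 0 ≤ B ∧ ∀ x : ℝ,
    ‖Q.eval x * (Real.exp (-x^2) / (1+2*x^2)^2)‖ ≤ B * Real.exp (-(1/2) * x^2) := by
  obtain ⟨B, hB, h⟩ := poly_bound Q
  refine ⟨B, hB, fun x => ?_⟩
  rw [Real.norm_eq_abs, abs_mul]
  have h2 : |Real.exp (-x^2) / (1+2*x^2)^2| ≤ Real.exp (-x^2) := by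
    rw [abs_of_nonneg (by positivity)]; exact weight_le x
  calc |Q.eval x| * |Real.exp (-x^2) / (1+2*x^2)^2|
      ≤ (B * Real.exp (x^2/2)) * Real.exp (-x^2) :=
        mul_le_mul (h x) h2 (abs_nonneg _) (by positivity)
  _ = B * Real.exp (-(1/2) * x^2) := by
        rw [mul_assoc, ← Real.exp_add]; ring_nf

lemma integrable_weighted (Q : ℝ[X]) :
    Integrable (fun x : ℝ => Q.eval x * (Real.exp (-x^2) / (1+2*x^2)^2)) := by
  obtain ⟨B, hB, h⟩ := bound_key Q
  apply Integrable.mono' ((integrable_exp_neg_mul_sq (by norm_num : (0:ℝ) < 1/2)).const_mul B)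
  · apply Continuous.aestronglyMeasurable
    exact Q.continuous.mul ((Real.continuous_exp.comp (continuous_pow 2).neg).div
      (by continuity) (fun x => by positivity))
  · exact Filter.Eventually.of_forall fun x => h x

lemma exp_half_tendsto_atTop : Tendsto (fun x : ℝ => Real.exp (-(1/2) * x^2)) atTop (nhds 0) := by
  apply Real.tendsto_exp_atBot.comp
  have h : Tendsto (fun x : ℝ => x^2) atTop atTop := tendsto_pow_atTop (by norm_num)
  have h2 : Tendsto (fun x : ℝ => (1/2) * x^2) atTop atTop := h.const_mul_atTop (by norm_num)
  simpa [neg_mul] using tendsto_neg_atBot_iff.mpr h2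

lemma exp_half_tendsto_atBot : Tendsto (fun x : ℝ => Real.exp (-(1/2) * x^2)) atBot (nhds 0) := by
  apply Real.tendsto_exp_atBot.comp
  have h : Tendsto (fun x : ℝ => x^2) atBot atTop := by
    have := (tendsto_pow_atTop (n := 2) (by norm_num)).comp tendsto_neg_atBot_atTop (α := ℝ)
    simpa [Function.comp_def, neg_pow] using this
  have h2 : Tendsto (fun x : ℝ => (1/2) * x^2) atBot atTop := h.const_mul_atTop (by norm_num)
  simpa [neg_mul] using tendsto_neg_atBot_iff.mpr h2

open Filter Real

lemma key_ident (m n : ℕ) (hm1 : m ≠ 1) (hm2 : m ≠ 2) (hn1 : n ≠ 1) (hn2 : n ≠ 2) :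
    (C 2 * X^2 + 1) *
        ((pE (m:ℤ) * (pE (n:ℤ)).derivative - pE (n:ℤ) * (pE (m:ℤ)).derivative).derivative
          - C 2 * X * (pE (m:ℤ) * (pE (n:ℤ)).derivative - pE (n:ℤ) * (pE (m:ℤ)).derivative))
      - C 8 * X * (pE (m:ℤ) * (pE (n:ℤ)).derivative - pE (n:ℤ) * (pE (m:ℤ)).derivative)
    = C (2*((m:ℝ)-(n:ℝ))) * ((C 2 * X^2 + 1) * (pE (m:ℤ) * pE (n:ℤ))) := by
  have om := pE_ode m hm1 hm2
  have hOn := pE_ode n hn1 hn2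
  simp only [derivative_sub, derivative_mul]
  simp only [map_mul, map_add, map_ofNat, map_one, map_natCast, map_pow, map_sub] at om hOn ⊢
  linear_combination (pE (m:ℤ)) * hOn - (pE (n:ℤ)) * om

lemma deriv_G (m n : ℕ) (hm1 : m ≠ 1) (hm2 : m ≠ 2) (hn1 : n ≠ 1) (hn2 : n ≠ 2) (x : ℝ) :
    HasDerivAt (fun y : ℝ => Real.exp (-y^2) *
        (pE (m:ℤ) * (pE (n:ℤ)).derivative - pE (n:ℤ) * (pE (m:ℤ)).derivative).eval y
        / (1+2*y^2)^2)
      ((2*(m:ℝ)-2*(n:ℝ)) * ((pE (m:ℤ)).eval x * (pE (n:ℤ)).eval x *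
        (Real.exp (-x^2) / (1+2*x^2)^2))) x := by
  have h1 : HasDerivAt (fun y : ℝ => Real.exp (-y^2)) (Real.exp (-x^2) * (-(2*x))) x := by
    have := (Real.hasDerivAt_exp (-x^2)).comp x ((hasDerivAt_pow 2 x).neg)
    simpa [Function.comp_def] using this
  have h2 : HasDerivAt (fun y : ℝ => ((pE (m:ℤ) * (pE (n:ℤ)).derivative - pE (n:ℤ) * (pE (m:ℤ)).derivative) : ℝ[X]).eval y) (((pE (m:ℤ) * (pE (n:ℤ)).derivative - pE (n:ℤ) * (pE (m:ℤ)).derivative) : ℝ[X]).derivative.eval x) x := Polynomial.hasDerivAt _ x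
  have h3 := (((hasDerivAt_pow 2 x).const_mul 2).const_add 1).pow 2
  have h4 := (h1.mul h2).div h3 (by simp; positivity)
  convert h4 using 1
  iterate 3 rfl
  have hk := congrArg (fun p : ℝ[X] => p.eval x) (key_ident m n hm1 hm2 hn1 hn2)
  simp only [eval_mul, eval_add, eval_sub, eval_pow, eval_ofNat, eval_X, eval_C, eval_one] at hk
  have hden : (0:ℝ) < 1 + 2*x^2 := by positivity
  rw [show (2*(m:ℝ)-2*(n:ℝ)) * ((pE (m:ℤ)).eval x * (pE (n:ℤ)).eval x *
        (Real.exp (-x^2) / (1+2*x^2)^2))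
      = ((2*(m:ℝ)-2*(n:ℝ)) * ((pE (m:ℤ)).eval x * (pE (n:ℤ)).eval x) * Real.exp (-x^2))
        / (1+2*x^2)^2 from by ring]
  rw [div_eq_div_iff (by positivity) (by simp; positivity)]
  simp only [eval_sub, eval_mul, Pi.pow_apply, Pi.mul_apply]
  linear_combination (-(Real.exp (-x^2) * (1+2*x^2)^3)) * hk

/-- orthogonality of the exceptional Hermite polynomials with respect
to the weight `e^{-x²}/(1+2x²)²`. -/
theorem exceptional_hermite_orthogonal (m n : ℕ)
    (hm1 : m ≠ 1) (hm2 : m ≠ 2) (hn1 : n ≠ 1) (hn2 : n ≠ 2) (hmn : m ≠ n) :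
    ∫ x : ℝ, (pE (m : ℤ)).eval x * (pE (n : ℤ)).eval x *
      (Real.exp (-x ^ 2) / (1 + 2 * x ^ 2) ^ 2) = 0 := by
  have hInt : Integrable (fun x : ℝ => (pE (m:ℤ)).eval x * (pE (n:ℤ)).eval x *
      (Real.exp (-x^2) / (1+2*x^2)^2)) := by
    have h := integrable_weighted (pE (m:ℤ) * pE (n:ℤ))
    simpa [eval_mul, mul_assoc] using h
  have hc : (2*(m:ℝ)-2*(n:ℝ)) ≠ 0 := by
    intro h
    apply hmn
    have : (m:ℝ) = n := by linarith
    exact_mod_cast this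
  set W : ℝ[X] := pE (m:ℤ) * (pE (n:ℤ)).derivative - pE (n:ℤ) * (pE (m:ℤ)).derivative with hW
  set G : ℝ → ℝ := fun y => Real.exp (-y^2) * W.eval y / (1+2*y^2)^2 with hG
  obtain ⟨B, hBnn, hb⟩ := bound_key W
  have hnorm : ∀ x : ℝ, ‖G x‖ ≤ B * Real.exp (-(1/2)*x^2) := by
    intro x
    refine le_trans (le_of_eq ?_) (hb x)
    show ‖Real.exp (-x^2) * W.eval x / (1+2*x^2)^2‖ = _
    rw [show Real.exp (-x^2) * W.eval x / (1+2*x^2)^2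
        = W.eval x * (Real.exp (-x^2) / (1+2*x^2)^2) from by ring]
  have hTop : Filter.Tendsto G Filter.atTop (nhds 0) :=
    squeeze_zero_norm hnorm (by simpa using exp_half_tendsto_atTop.const_mul B)
  have hBot : Filter.Tendsto G Filter.atBot (nhds 0) :=
    squeeze_zero_norm hnorm (by simpa using exp_half_tendsto_atBot.const_mul B)
  have hD : ∀ x : ℝ, HasDerivAt G ((2*(m:ℝ)-2*(n:ℝ)) * ((pE (m:ℤ)).eval x * (pE (n:ℤ)).eval x *
      (Real.exp (-x^2) / (1+2*x^2)^2))) x := fun x => deriv_G m n hm1 hm2 hn1 hn2 x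
  have hInt' := hInt.const_mul (2*(m:ℝ)-2*(n:ℝ))
  have hIoi : ∫ x in Set.Ioi (0:ℝ), (2*(m:ℝ)-2*(n:ℝ)) * ((pE (m:ℤ)).eval x * (pE (n:ℤ)).eval x *
      (Real.exp (-x^2) / (1+2*x^2)^2)) = 0 - G 0 :=
    integral_Ioi_of_hasDerivAt_of_tendsto' (fun x _ => hD x) hInt'.integrableOn hTop
  have hIic : ∫ x in Set.Iic (0:ℝ), (2*(m:ℝ)-2*(n:ℝ)) * ((pE (m:ℤ)).eval x * (pE (n:ℤ)).eval x *
      (Real.exp (-x^2) / (1+2*x^2)^2)) = G 0 - 0 :=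
    integral_Iic_of_hasDerivAt_of_tendsto' (fun x _ => hD x) hInt'.integrableOn hBot
  have hsum := intervalIntegral.integral_Iic_add_Ioi (b := (0:ℝ)) (μ := volume)
    hInt'.integrableOn hInt'.integrableOn
  rw [hIic, hIoi] at hsum
  have h0 : ∫ x : ℝ, (2*(m:ℝ)-2*(n:ℝ)) * ((pE (m:ℤ)).eval x * (pE (n:ℤ)).eval x *
      (Real.exp (-x^2) / (1+2*x^2)^2)) = 0 := by rw [← hsum]; ring
  rw [integral_const_mul] at h0
  rcases mul_eq_zero.1 h0 with h | h
  · exact absurd h hc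
  · simpa using h
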